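/- Let D = ℤ_(2) and let A be the ring of Hurwitz quaternions over D inside the rational quaternion division algebra B. Then every element of B that is integral over D belongs to A; that is, A equals the set of all elements of B integral over D. -/

import Mathlib

/-- Membership in `ℤ_(2)`, the localization of `ℤ` at the prime `2`: a rational number with
odd denominator. -/
def memZ2 (x : ℚ) : Prop := ∃ m n : ℤ, Odd n ∧ x = (m : ℚ) / (n : ℚ)

namespace Hur

lemma odd_ne_zero {n : ℤ} (h : Odd n) : n ≠ 0 := by
  rintro rfl
  exact (Int.not_odd_iff_even.mpr Even.zero) h

lemma odd_of_dvd {d w : ℤ} (h : d ∣ w) (hw : Odd w) : Odd d := by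
  rw [← Int.not_even_iff_odd] at hw ⊢
  intro he
  exact hw ((even_iff_two_dvd).mpr (dvd_trans (even_iff_two_dvd.mp he) h))

lemma memZ2_zero : memZ2 0 := ⟨0, 1, ⟨0, by ring⟩, by norm_num⟩
lemma memZ2_one : memZ2 1 := ⟨1, 1, ⟨0, by ring⟩, by norm_num⟩

lemma memZ2_add {x y : ℚ} (hx : memZ2 x) (hy : memZ2 y) : memZ2 (x + y) := by
  obtain ⟨a, b, hb, rfl⟩ := hx
  obtain ⟨c, d, hd, rfl⟩ := hy
  refine ⟨a * d + c * b, b * d, hb.mul hd, ?_⟩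
  have hb0 : (b : ℚ) ≠ 0 := Int.cast_ne_zero.mpr (odd_ne_zero hb)
  have hd0 : (d : ℚ) ≠ 0 := Int.cast_ne_zero.mpr (odd_ne_zero hd)
  push_cast
  field_simp

lemma memZ2_neg {x : ℚ} (hx : memZ2 x) : memZ2 (-x) := by
  obtain ⟨a, b, hb, rfl⟩ := hx
  exact ⟨-a, b, hb, by push_cast; ring⟩

lemma memZ2_mul {x y : ℚ} (hx : memZ2 x) (hy : memZ2 y) : memZ2 (x * y) := by
  obtain ⟨a, b, hb, rfl⟩ := hx
  obtain ⟨c, d, hd, rfl⟩ := hy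
  refine ⟨a * c, b * d, hb.mul hd, ?_⟩
  have hb0 : (b : ℚ) ≠ 0 := Int.cast_ne_zero.mpr (odd_ne_zero hb)
  have hd0 : (d : ℚ) ≠ 0 := Int.cast_ne_zero.mpr (odd_ne_zero hd)
  push_cast
  field_simp

/-- `ℤ_(2)` as a subring of `ℚ`. -/
def S : Subring ℚ where
  carrier := {x | memZ2 x}
  zero_mem' := memZ2_zero
  one_mem' := memZ2_one
  add_mem' := memZ2_add
  neg_mem' := memZ2_neg
  mul_mem' := memZ2_mul

lemma mem_S {x : ℚ} : x ∈ S ↔ memZ2 x := Iff.rfl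

open Polynomial

/-- Step A: a rational root of a monic polynomial with `memZ2` coefficients is in `ℤ_(2)`. -/
lemma ratRoot {p : ℚ[X]} (hm : p.Monic) (hc : ∀ i, memZ2 (p.coeff i)) {x : ℚ}
    (hx : p.eval x = 0) : memZ2 x := by
  classical
  choose m w hodd heq using hc
  set n := p.natDegree with hn
  set W : ℤ := ∏ i ∈ Finset.range (n + 1), w i with hW
  have hWodd : Odd W := by
    refine Finset.prod_induction _ Odd (fun a b => Odd.mul) ⟨0, by ring⟩ ?_
    exact fun i _ => hodd i
  set k : ℕ → ℤ := fun i => m i * ∏ j ∈ (Finset.range (n + 1)).erase i, w j with hk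
  have hkcast : ∀ i ∈ Finset.range (n + 1), (k i : ℚ) = W * p.coeff i := by
    intro i hi
    have hmul : w i * ∏ j ∈ (Finset.range (n + 1)).erase i, w j = W :=
      Finset.mul_prod_erase _ _ hi
    have hwi : ((w i : ℚ)) ≠ 0 := Int.cast_ne_zero.mpr (odd_ne_zero (hodd i))
    rw [heq i, hk]
    push_cast [← hmul]
    field_simp
  set P : ℤ[X] := ∑ i ∈ Finset.range (n + 1), C (k i) * X ^ i with hP
  have hPeval : Polynomial.aeval x P = 0 := by
    rw [hP, map_sum]
    have : ∀ i ∈ Finset.range (n + 1),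
        Polynomial.aeval x (C (k i) * X ^ i) = (W : ℚ) * (p.coeff i * x ^ i) := by
      intro i hi
      simp [hkcast i hi]
      ring
    rw [Finset.sum_congr rfl this, ← Finset.mul_sum]
    rw [← Polynomial.eval_eq_sum_range, hx, mul_zero]
  have hPcoeffn : P.coeff n = W := by
    rw [hP, Polynomial.finset_sum_coeff]
    simp only [Polynomial.coeff_C_mul, Polynomial.coeff_X_pow]
    rw [Finset.sum_eq_single n]
    · simp
      have : (k n : ℚ) = W * p.coeff n := hkcast n (by simp)
      rw [Polynomial.Monic.coeff_natDegree hm] at this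
      exact_mod_cast this.trans (mul_one _)
    · intro b _ hb
      simp only [mul_ite, mul_one, mul_zero, ite_eq_right_iff]
      intro h; exact absurd h.symm hb
    · intro h; simp at h
  have hWne : W ≠ 0 := odd_ne_zero hWodd
  have hdegle : P.natDegree ≤ n := by
    refine Polynomial.natDegree_sum_le_of_forall_le _ _ fun i hi => ?_
    refine (Polynomial.natDegree_C_mul_le _ _).trans ?_
    simp [Polynomial.natDegree_X_pow]
    exact Nat.lt_succ_iff.mp (Finset.mem_range.mp hi)
  have hdeg : P.natDegree = n := le_antisymm hdegle
    (Polynomial.le_natDegree_of_ne_zero (by rw [hPcoeffn]; exact hWne))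
  have hlead : P.leadingCoeff = W := by rw [Polynomial.leadingCoeff, hdeg, hPcoeffn]
  have hdvd : (IsFractionRing.den ℤ x : ℤ) ∣ W := by
    rw [← hlead]
    exact den_dvd_of_is_root hPeval
  refine ⟨IsFractionRing.num ℤ x, (IsFractionRing.den ℤ x : ℤ), odd_of_dvd hdvd hWodd, ?_⟩
  have := IsFractionRing.mk'_num_den' ℤ x
  have h2 : ((IsFractionRing.num ℤ x : ℚ)) / (((IsFractionRing.den ℤ x : ℤ)) : ℚ) = x := by
    simpa using this
  exact h2.symm

noncomputable instance : Algebra S ℂ :=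
  ((algebraMap ℚ ℂ).comp S.subtype).toAlgebra

lemma algebraMap_S_C : (algebraMap S ℂ) = (algebraMap ℚ ℂ).comp S.subtype := rfl

/-- If `z : ℂ` is a root of (the image of) a monic `ℚ`-polynomial with `memZ2`
coefficients, then `z` is integral over `S`. -/
lemma isIntegral_of_root {p : ℚ[X]} (hm : p.Monic) (hc : ∀ i, memZ2 (p.coeff i))
    {z : ℂ} (hz : (p.map (algebraMap ℚ ℂ)).eval z = 0) : IsIntegral S z := by
  have hsub : (↑p.coeffs : Set ℚ) ⊆ S := by
    intro c hc'
    obtain ⟨i, _, rfl⟩ := Polynomial.mem_coeffs_iff.mp hc'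
    exact hc i
  refine ⟨p.toSubring S hsub, (Polynomial.monic_toSubring p S hsub).mpr hm, ?_⟩
  have hmap : (p.toSubring S hsub).map S.subtype = p := p.map_toSubring S hsub
  calc Polynomial.eval₂ (algebraMap S ℂ) z (p.toSubring S hsub)
      = Polynomial.eval₂ (algebraMap ℚ ℂ) z ((p.toSubring S hsub).map S.subtype) := by
        rw [Polynomial.eval₂_map]; rfl
    _ = 0 := by rw [hmap, ← Polynomial.eval_map, hz]

/-- A rational number integral over `S` (as a complex number) is in `ℤ_(2)`. -/
lemma memZ2_of_isIntegral {t : ℚ} (h : IsIntegral S ((t : ℂ))) : memZ2 t := by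
  obtain ⟨g, hgm, hgz⟩ := h
  set g' : ℚ[X] := g.map (algebraMap S ℚ) with hg'
  have hg'm : g'.Monic := hgm.map _
  have hg'c : ∀ i, memZ2 (g'.coeff i) := by
    intro i
    rw [hg', Polynomial.coeff_map]
    exact (g.coeff i).2
  have hsub : algebraMap S ℚ = S.subtype := rfl
  have heval : (algebraMap ℚ ℂ) (g'.eval t) = 0 := by
    have h1 : Polynomial.eval₂ (algebraMap S ℂ) ((t : ℚ) : ℂ) g
        = Polynomial.eval₂ (algebraMap ℚ ℂ) ((algebraMap ℚ ℂ) t) g' := by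
      rw [hg', hsub, Polynomial.eval₂_map]
      rfl
    rw [← Polynomial.eval₂_at_apply, ← h1, hgz]
  have hinj : Function.Injective (algebraMap ℚ ℂ) := (algebraMap ℚ ℂ).injective
  have : g'.eval t = 0 := by
    apply hinj; rw [heval, map_zero]
  exact ratRoot hg'm hg'c this

lemma int3 {k1 k2 k3 : ℤ} (h : (4:ℤ) ∣ k1^2 + k2^2 + k3^2) :
    Even k1 ∧ Even k2 ∧ Even k3 := by
  obtain ⟨q1, r1, hr1, hk1⟩ : ∃ q r : ℤ, (r = 0 ∨ r = 1) ∧ k1 = 2*q + r :=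
    ⟨k1/2, k1%2, by omega, by omega⟩
  obtain ⟨q2, r2, hr2, hk2⟩ : ∃ q r : ℤ, (r = 0 ∨ r = 1) ∧ k2 = 2*q + r :=
    ⟨k2/2, k2%2, by omega, by omega⟩
  obtain ⟨q3, r3, hr3, hk3⟩ : ∃ q r : ℤ, (r = 0 ∨ r = 1) ∧ k3 = 2*q + r :=
    ⟨k3/2, k3%2, by omega, by omega⟩
  subst hk1 hk2 hk3
  have e : ∀ q r : ℤ, (2*q+r)^2 = 4*(q*q+q*r) + r*r := fun q r => by ring
  rw [e, e, e] at h
  have hrr1 : r1*r1 = r1 := by rcases hr1 with rfl | rfl <;> norm_num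
  have hrr2 : r2*r2 = r2 := by rcases hr2 with rfl | rfl <;> norm_num
  have hrr3 : r3*r3 = r3 := by rcases hr3 with rfl | rfl <;> norm_num
  rw [hrr1, hrr2, hrr3] at h
  set A1 := q1*q1+q1*r1 with hA1
  set A2 := q2*q2+q2*r2 with hA2
  set A3 := q3*q3+q3*r3 with hA3
  have hall : r1 = 0 ∧ r2 = 0 ∧ r3 = 0 := by omega
  obtain ⟨rfl, rfl, rfl⟩ := hall
  exact ⟨Int.even_iff.mpr (by omega), Int.even_iff.mpr (by omega), Int.even_iff.mpr (by omega)⟩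

lemma int4 {k0 k1 k2 k3 : ℤ} (h : (4:ℤ) ∣ k0^2 + k1^2 + k2^2 + k3^2) :
    (Even k0 ∧ Even k1 ∧ Even k2 ∧ Even k3) ∨ (Odd k0 ∧ Odd k1 ∧ Odd k2 ∧ Odd k3) := by
  obtain ⟨q0, r0, hr0, hk0⟩ : ∃ q r : ℤ, (r = 0 ∨ r = 1) ∧ k0 = 2*q + r :=
    ⟨k0/2, k0%2, by omega, by omega⟩
  obtain ⟨q1, r1, hr1, hk1⟩ : ∃ q r : ℤ, (r = 0 ∨ r = 1) ∧ k1 = 2*q + r :=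
    ⟨k1/2, k1%2, by omega, by omega⟩
  obtain ⟨q2, r2, hr2, hk2⟩ : ∃ q r : ℤ, (r = 0 ∨ r = 1) ∧ k2 = 2*q + r :=
    ⟨k2/2, k2%2, by omega, by omega⟩
  obtain ⟨q3, r3, hr3, hk3⟩ : ∃ q r : ℤ, (r = 0 ∨ r = 1) ∧ k3 = 2*q + r :=
    ⟨k3/2, k3%2, by omega, by omega⟩
  subst hk0 hk1 hk2 hk3
  have e : ∀ q r : ℤ, (2*q+r)^2 = 4*(q*q+q*r) + r*r := fun q r => by ring
  rw [e, e, e, e] at h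
  have hrr0 : r0*r0 = r0 := by rcases hr0 with rfl | rfl <;> norm_num
  have hrr1 : r1*r1 = r1 := by rcases hr1 with rfl | rfl <;> norm_num
  have hrr2 : r2*r2 = r2 := by rcases hr2 with rfl | rfl <;> norm_num
  have hrr3 : r3*r3 = r3 := by rcases hr3 with rfl | rfl <;> norm_num
  rw [hrr0, hrr1, hrr2, hrr3] at h
  set A0 := q0*q0+q0*r0 with hA0
  set A1 := q1*q1+q1*r1 with hA1
  set A2 := q2*q2+q2*r2 with hA2
  set A3 := q3*q3+q3*r3 with hA3
  have hall : (r0 = 0 ∧ r1 = 0 ∧ r2 = 0 ∧ r3 = 0) ∨ (r0 = 1 ∧ r1 = 1 ∧ r2 = 1 ∧ r3 = 1) := by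
    omega
  rcases hall with ⟨rfl, rfl, rfl, rfl⟩ | ⟨rfl, rfl, rfl, rfl⟩
  · exact Or.inl ⟨Int.even_iff.mpr (by omega), Int.even_iff.mpr (by omega),
      Int.even_iff.mpr (by omega), Int.even_iff.mpr (by omega)⟩
  · exact Or.inr ⟨Int.odd_iff.mpr (by omega), Int.odd_iff.mpr (by omega),
      Int.odd_iff.mpr (by omega), Int.odd_iff.mpr (by omega)⟩

lemma four_dvd_of_odd {w K : ℤ} (hw : Odd w) (h : (4:ℤ) ∣ K * w) : (4:ℤ) ∣ K := by
  have h2w : ¬ (2:ℤ) ∣ w := by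
    rw [Int.odd_iff] at hw; omega
  have hp : Prime (2:ℤ) := Int.prime_two
  have h1 : (2:ℤ) ∣ K * w := dvd_trans (by norm_num) h
  have h2 : (2:ℤ) ∣ K := ((hp.dvd_mul).mp h1).resolve_right h2w
  obtain ⟨K', rfl⟩ := h2
  have h3 : (2:ℤ) ∣ K' * w := by
    obtain ⟨c, hc⟩ := h
    exact ⟨c, by linarith⟩
  have h4 : (2:ℤ) ∣ K' := ((hp.dvd_mul).mp h3).resolve_right h2w
  obtain ⟨K'', rfl⟩ := h4
  exact ⟨K'' * w * 0 + K'', by ring⟩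

lemma L3aux : ∀ e : ℕ, ∀ u : ℤ, Odd u → ∀ k1 k2 k3 : ℤ,
    memZ2 (((k1^2 + k2^2 + k3^2 : ℤ) : ℚ) / (((2^e * u : ℤ) : ℚ))^2) →
    memZ2 ((k1 : ℚ) / ((2^e * u : ℤ) : ℚ)) ∧ memZ2 ((k2 : ℚ) / ((2^e * u : ℤ) : ℚ)) ∧
      memZ2 ((k3 : ℚ) / ((2^e * u : ℤ) : ℚ)) := by
  intro e
  induction e with
  | zero =>
    intro u hu k1 k2 k3 _
    refine ⟨⟨k1, u, hu, by push_cast; norm_num⟩, ⟨k2, u, hu, by push_cast; norm_num⟩,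
      ⟨k3, u, hu, by push_cast; norm_num⟩⟩
  | succ e ih =>
    intro u hu k1 k2 k3 hmem
    have hu0 : u ≠ 0 := odd_ne_zero hu
    set d : ℤ := 2^(e+1) * u with hd
    have hd0 : d ≠ 0 := by
      simp [hd]
      exact hu0
    have hdQ : ((d : ℤ) : ℚ) ≠ 0 := Int.cast_ne_zero.mpr hd0
    obtain ⟨m, w, hw, heq⟩ := hmem
    have hw0 : w ≠ 0 := odd_ne_zero hw
    have hwQ : ((w : ℤ) : ℚ) ≠ 0 := Int.cast_ne_zero.mpr hw0
    have hcross : (k1^2 + k2^2 + k3^2) * w = m * d^2 := by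
      have hq : ((k1^2 + k2^2 + k3^2 : ℤ) : ℚ) * w = m * (d:ℚ)^2 := by
        rw [div_eq_div_iff (by positivity) hwQ] at heq
        exact_mod_cast heq
      exact_mod_cast hq
    have h4K : (4:ℤ) ∣ (k1^2 + k2^2 + k3^2) := by
      apply four_dvd_of_odd hw
      rw [hcross]
      have hdd : (4:ℤ) ∣ d^2 := ⟨(2^e)^2 * u^2, by rw [hd]; ring⟩
      exact Dvd.dvd.mul_left hdd m
    obtain ⟨⟨k1', rfl⟩, ⟨k2', rfl⟩, ⟨k3', rfl⟩⟩ := int3 h4K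
    have huQ : (u:ℚ) ≠ 0 := Int.cast_ne_zero.mpr hu0
    have h2e : ((2:ℚ)^e * u) ≠ 0 := mul_ne_zero (by positivity) huQ
    have h2e1 : ((2:ℚ)^(e+1) * u) ≠ 0 := mul_ne_zero (by positivity) huQ
    have hre : ∀ k' : ℤ, ((k' + k' : ℤ) : ℚ) / ((d:ℤ):ℚ) = (k' : ℚ) / ((2^e * u : ℤ) : ℚ) := by
      intro k'
      rw [hd]
      push_cast
      rw [div_eq_div_iff h2e1 h2e]
      ring
    have hmem' : memZ2 (((k1'^2 + k2'^2 + k3'^2 : ℤ) : ℚ) / (((2^e * u : ℤ) : ℚ))^2) := by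
      refine ⟨m, w, hw, ?_⟩
      have hcast : (((k1'+k1')^2 + (k2'+k2')^2 + (k3'+k3')^2 : ℤ):ℚ)
          = 4 * ((k1'^2 + k2'^2 + k3'^2 : ℤ):ℚ) := by push_cast; ring
      have h4d : ((d:ℤ):ℚ)^2 = 4 * (((2^e * u : ℤ) : ℚ))^2 := by
        rw [hd]; push_cast; ring
      rw [hcast, h4d] at heq
      rw [← heq]
      exact (mul_div_mul_left _ _ (by norm_num : (4:ℚ) ≠ 0)).symm
    obtain ⟨m1, m2, m3⟩ := ih u hu k1' k2' k3' hmem'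
    exact ⟨by rw [hre k1']; exact m1, by rw [hre k2']; exact m2, by rw [hre k3']; exact m3⟩

/-- write a rational with denominator dividing `d` as `k / d`. -/
lemma exists_int_div {x : ℚ} {d : ℤ} (hd : d ≠ 0) (hdvd : (x.den : ℤ) ∣ d) :
    ∃ k : ℤ, x = (k : ℚ) / (d : ℚ) := by
  obtain ⟨c, hc⟩ := hdvd
  refine ⟨x.num * c, ?_⟩
  have hc0 : c ≠ 0 := by
    rintro rfl
    simp at hc
    exact hd (by rw [hc])
  have hden : ((x.den : ℤ) : ℚ) ≠ 0 := by
    exact_mod_cast (Nat.cast_ne_zero (R := ℚ)).mpr x.den_nz -- check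
  rw [hc]
  push_cast
  rw [mul_div_mul_right _ _ (Int.cast_ne_zero.mpr hc0)]
  exact (Rat.num_div_den x).symm

/-- Sum of three rational squares in `ℤ_(2)` implies each term is. -/
lemma L3 {b1 b2 b3 : ℚ} (h : memZ2 (b1^2 + b2^2 + b3^2)) :
    memZ2 b1 ∧ memZ2 b2 ∧ memZ2 b3 := by
  set D : ℕ := b1.den * b2.den * b3.den with hD
  have hD0 : D ≠ 0 := by positivity
  set e : ℕ := D.factorization 2 with he
  set u : ℕ := D / 2 ^ e with hu
  have hDe : 2 ^ e * u = D := Nat.ordProj_mul_ordCompl_eq_self D 2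
  have huodd : ¬ 2 ∣ u := Nat.not_dvd_ordCompl Nat.prime_two hD0
  have huoddZ : Odd (u : ℤ) := by
    rw [Int.odd_iff]
    omega
  set d : ℤ := 2 ^ e * (u : ℤ) with hd
  have hdD : d = (D : ℤ) := by
    rw [hd, ← hDe]
    push_cast
    ring
  have hd0 : d ≠ 0 := by
    rw [hdD]
    exact_mod_cast hD0
  have hdvd1 : (b1.den : ℤ) ∣ d := by
    rw [hdD]
    exact Int.natCast_dvd_natCast.mpr ⟨b2.den * b3.den, by rw [hD]; ring⟩
  have hdvd2 : (b2.den : ℤ) ∣ d := by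
    rw [hdD]
    exact Int.natCast_dvd_natCast.mpr ⟨b1.den * b3.den, by rw [hD]; ring⟩
  have hdvd3 : (b3.den : ℤ) ∣ d := by
    rw [hdD]
    exact Int.natCast_dvd_natCast.mpr ⟨b1.den * b2.den, by rw [hD]; ring⟩
  obtain ⟨k1, hk1⟩ := exists_int_div (x := b1) hd0 hdvd1
  obtain ⟨k2, hk2⟩ := exists_int_div (x := b2) hd0 hdvd2
  obtain ⟨k3, hk3⟩ := exists_int_div (x := b3) hd0 hdvd3
  have hsum : b1^2 + b2^2 + b3^2 = ((k1^2 + k2^2 + k3^2 : ℤ) : ℚ) / ((d : ℚ))^2 := by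
    rw [hk1, hk2, hk3]
    have hdQ : (d : ℚ) ≠ 0 := Int.cast_ne_zero.mpr hd0
    push_cast
    field_simp
  rw [hsum] at h
  have := L3aux e (u : ℤ) huoddZ k1 k2 k3 (by rw [← hd]; exact_mod_cast h)
  rw [hk1, hk2, hk3]
  have hdu : ((d : ℤ) : ℚ) = ((2 ^ e * (u:ℤ) : ℤ) : ℚ) := by rw [hd]
  exact ⟨by rw [hdu]; exact this.1, by rw [hdu]; exact this.2.1, by rw [hdu]; exact this.2.2⟩

lemma key (α : Quaternion ℚ)
    (hint : ∃ p : Polynomial ℚ, p.Monic ∧ (∀ i, memZ2 (p.coeff i)) ∧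
      Polynomial.aeval α p = 0) :
    memZ2 (2 * α.re) ∧ memZ2 (α.re ^ 2 + α.imI ^ 2 + α.imJ ^ 2 + α.imK ^ 2) := by
  obtain ⟨p, hm, hc, hroot⟩ := hint
  set t : ℚ := 2 * α.re with ht
  set nn : ℚ := α.re ^ 2 + α.imI ^ 2 + α.imJ ^ 2 + α.imK ^ 2 with hnn
  by_cases him : α.imI = 0 ∧ α.imJ = 0 ∧ α.imK = 0
  · -- rational case
    obtain ⟨h1, h2, h3⟩ := him
    have hα : α = algebraMap ℚ (Quaternion ℚ) α.re := by
      ext <;> simp [Quaternion.algebraMap_def, h1, h2, h3]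
    have heval : p.eval α.re = 0 := by
      have h4 : Polynomial.aeval (algebraMap ℚ (Quaternion ℚ) α.re) p
          = algebraMap ℚ (Quaternion ℚ) (p.eval α.re) :=
        Polynomial.aeval_algebraMap_apply_eq_algebraMap_eval _ _
      rw [← hα, hroot] at h4
      have h5 : algebraMap ℚ (Quaternion ℚ) (p.eval α.re) = algebraMap ℚ (Quaternion ℚ) 0 := by
        rw [← h4, map_zero]
      exact Quaternion.algebraMap_injective h5
    have hre := ratRoot hm hc heval
    constructor
    · have h2' : memZ2 ((1 : ℚ) + 1) := memZ2_add memZ2_one memZ2_one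
      have he : ((1 : ℚ) + 1) = 2 := by norm_num
      rw [he] at h2'
      exact memZ2_mul h2' hre
    · rw [hnn, h1, h2, h3]
      have hsq : memZ2 (α.re ^ 2) := by
        have := memZ2_mul hre hre
        rwa [← pow_two] at this
      simpa using hsq
  · -- non-rational case
    set c : ℚ[X] := X ^ 2 + C (-t) * X + C nn with hcdef
    have hlindeg : (C (-t) * X + C nn : ℚ[X]).degree < 2 := by
      refine lt_of_le_of_lt (Polynomial.degree_add_le _ _) ?_
      rw [max_lt_iff]
      constructor
      · exact lt_of_le_of_lt (Polynomial.degree_C_mul_X_le _) (by norm_num)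
      · exact lt_of_le_of_lt Polynomial.degree_C_le (by norm_num)
    have hcmonic : c.Monic := by
      have h2 := Polynomial.monic_X_pow_add (n := 2) hlindeg
      have he : c = X ^ 2 + (C (-t) * X + C nn) := by rw [hcdef, add_assoc]
      rwa [← he] at h2
    have hcd2 : c.degree = 2 := by
      rw [hcdef, add_assoc, Polynomial.degree_add_eq_left_of_degree_lt]
      · exact Polynomial.degree_X_pow 2
      · rw [Polynomial.degree_X_pow]
        exact hlindeg
    have hcα : Polynomial.aeval α c = 0 := by
      rw [hcdef]
      simp only [map_add, map_mul, map_pow, Polynomial.aeval_X, Polynomial.aeval_C]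
      ext <;>
        simp [Quaternion.re_mul, Quaternion.imI_mul, Quaternion.imJ_mul, Quaternion.imK_mul,
          Quaternion.algebraMap_def, pow_two, ht, hnn, Quaternion.re_zero, Quaternion.imI_zero,
            Quaternion.imJ_zero, Quaternion.imK_zero] <;> ring
    -- remainder
    have hrem : p %ₘ c = 0 := by
      set r := p %ₘ c with hr
      have hdeg : r.degree < 2 := by
        have := Polynomial.degree_modByMonic_lt p hcmonic
        rwa [hcd2] at this
      have hnd : r.natDegree ≤ 1 := by
        by_cases h0 : r = 0
        · simp [h0]
        · have h6 : r.natDegree < 2 := by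
            rw [Polynomial.natDegree_lt_iff_degree_lt h0]
            exact_mod_cast hdeg
          omega
      have hr2 : r = C (r.coeff 1) * X + C (r.coeff 0) :=
        Polynomial.eq_X_add_C_of_natDegree_le_one hnd
      have hrα : Polynomial.aeval α r = 0 := by
        have h7 := Polynomial.modByMonic_add_div p c
        have h5 : Polynomial.aeval α (p %ₘ c + c * (p /ₘ c)) = 0 := by rw [h7, hroot]
        rw [map_add, map_mul, hcα, zero_mul, add_zero] at h5
        exact h5
      rw [hr2] at hrα
      simp only [map_add, map_mul, Polynomial.aeval_X, Polynomial.aeval_C] at hrα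
      have himI : r.coeff 1 * α.imI = 0 := by
        have := congrArg QuaternionAlgebra.imI hrα
        simpa [Quaternion.imI_mul, Quaternion.algebraMap_def, Quaternion.imI_zero] using this
      have himJ : r.coeff 1 * α.imJ = 0 := by
        have := congrArg QuaternionAlgebra.imJ hrα
        simpa [Quaternion.imJ_mul, Quaternion.algebraMap_def, Quaternion.imJ_zero] using this
      have himK : r.coeff 1 * α.imK = 0 := by
        have := congrArg QuaternionAlgebra.imK hrα
        simpa [Quaternion.imK_mul, Quaternion.algebraMap_def, Quaternion.imK_zero] using this
      have hre' : r.coeff 1 * α.re + r.coeff 0 = 0 := by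
        have := congrArg QuaternionAlgebra.re hrα
        simpa [Quaternion.re_mul, Quaternion.algebraMap_def, Quaternion.re_zero] using this
      have hc1 : r.coeff 1 = 0 := by
        rcases not_and_or.mp him with h | h
        · rcases mul_eq_zero.mp himI with h' | h'
          · exact h'
          · exact absurd h' h
        rcases not_and_or.mp h with h | h
        · rcases mul_eq_zero.mp himJ with h' | h'
          · exact h'
          · exact absurd h' h
        · rcases mul_eq_zero.mp himK with h' | h'
          · exact h'
          · exact absurd h' h
      have hc0 : r.coeff 0 = 0 := by
        rw [hc1, zero_mul, zero_add] at hre'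
        exact hre'
      rw [hr2, hc1, hc0]
      simp
    have hdvd : c ∣ p := (Polynomial.modByMonic_eq_zero_iff_dvd hcmonic).mp hrem
    obtain ⟨q, hq⟩ := hdvd
    -- complex roots
    have hcdeg : 0 < (c.map (algebraMap ℚ ℂ)).degree := by
      rw [Polynomial.degree_map, hcd2]
      norm_num
    obtain ⟨z, hz⟩ := Complex.exists_root hcdeg
    have hzeq : z ^ 2 - (t : ℂ) * z + (nn : ℂ) = 0 := by
      have h8 : (c.map (algebraMap ℚ ℂ)).eval z = 0 := hz
      rw [hcdef] at h8
      simp only [Polynomial.map_add, Polynomial.map_mul, Polynomial.map_pow,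
        Polynomial.map_X, Polynomial.map_C, Polynomial.eval_add, Polynomial.eval_mul,
        Polynomial.eval_pow, Polynomial.eval_X, Polynomial.eval_C, map_neg,
        Polynomial.map_neg, Polynomial.eval_neg] at h8
      have h9 : (algebraMap ℚ ℂ) t = (t : ℂ) := by norm_num [eq_ratCast]
      have h10 : (algebraMap ℚ ℂ) nn = (nn : ℂ) := by norm_num [eq_ratCast]
      rw [h9, h10] at h8
      linear_combination h8
    set z' : ℂ := (t : ℂ) - z with hz'
    -- z and z' are roots of (map p)
    have hrootp : ∀ w : ℂ, w ^ 2 - (t : ℂ) * w + (nn : ℂ) = 0 →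
        (p.map (algebraMap ℚ ℂ)).eval w = 0 := by
      intro w hw
      rw [hq, Polynomial.map_mul, Polynomial.eval_mul]
      have : (c.map (algebraMap ℚ ℂ)).eval w = 0 := by
        rw [hcdef]
        simp only [Polynomial.map_add, Polynomial.map_mul, Polynomial.map_pow,
          Polynomial.map_X, Polynomial.map_C, Polynomial.eval_add, Polynomial.eval_mul,
          Polynomial.eval_pow, Polynomial.eval_X, Polynomial.eval_C, map_neg,
          Polynomial.map_neg, Polynomial.eval_neg]
        have h9 : (algebraMap ℚ ℂ) t = (t : ℂ) := by norm_num [eq_ratCast]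
        have h10 : (algebraMap ℚ ℂ) nn = (nn : ℂ) := by norm_num [eq_ratCast]
        rw [h9, h10]
        linear_combination hw
      rw [this, zero_mul]
    have hz'eq : z' ^ 2 - (t : ℂ) * z' + (nn : ℂ) = 0 := by
      rw [hz']
      ring_nf
      ring_nf at hzeq
      linear_combination hzeq
    have hiz : IsIntegral S z := isIntegral_of_root hm hc (hrootp z hzeq)
    have hiz' : IsIntegral S z' := isIntegral_of_root hm hc (hrootp z' hz'eq)
    constructor
    · have : IsIntegral S ((t : ℂ)) := by
        have h11 := hiz.add hiz'
        have h12 : z + z' = (t : ℂ) := by rw [hz']; ring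
        rwa [h12] at h11
      exact memZ2_of_isIntegral this
    · have : IsIntegral S ((nn : ℂ)) := by
        have h11 := hiz.mul hiz'
        have h12 : z * z' = (nn : ℂ) := by
          rw [hz']
          linear_combination -hzeq
        rwa [h12] at h11
      exact memZ2_of_isIntegral this

lemma scale {x : ℚ} {m w c : ℤ} (hx : x = (m:ℚ)/(w:ℚ)) (hc : c ≠ 0) :
    x = ((m*c : ℤ):ℚ)/((w*c : ℤ):ℚ) := by
  push_cast
  rw [mul_div_mul_right _ _ (Int.cast_ne_zero.mpr hc)]
  exact hx

lemma half_even {a : ℚ} {k u : ℤ} (hu : ((u:ℤ):ℚ) ≠ 0) (h : 2*a = ((k+k:ℤ):ℚ)/((u:ℤ):ℚ)) :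
    a = ((k:ℤ):ℚ)/((u:ℤ):ℚ) := by
  push_cast at h
  field_simp at h ⊢
  linarith

lemma half_odd {a : ℚ} {k u : ℤ} (hu : ((u:ℤ):ℚ) ≠ 0) (h : 2*a = ((k:ℤ):ℚ)/((u:ℤ):ℚ))
    {s : ℤ} (hs : k - u = s + s) : a - 1/2 = ((s:ℤ):ℚ)/((u:ℤ):ℚ) := by
  have hk : ((k:ℤ):ℚ) = ((u:ℤ):ℚ) + (((s:ℤ):ℚ) + ((s:ℤ):ℚ)) := by
    exact_mod_cast congrArg (Int.cast : ℤ → ℚ) (by omega : k = u + (s + s))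
  rw [hk] at h
  field_simp at h ⊢
  linarith

end Hur

/-- Let `D = ℤ_(2)` and let `A` be the ring of Hurwitz quaternions over `D` inside the
rational quaternion algebra `B`: the quaternions with all coordinates in `ℤ_(2)`, or all in
`ℤ_(2) + 1/2`.  Every element of `B` that is integral over `D` (i.e. is a root of a monic
polynomial with coefficients in `ℤ_(2)`) belongs to `A`. -/
theorem stmt_9 (α : Quaternion ℚ)
    (hint : ∃ p : Polynomial ℚ, p.Monic ∧ (∀ i, memZ2 (p.coeff i)) ∧
      Polynomial.aeval α p = 0) :
    (memZ2 α.re ∧ memZ2 α.imI ∧ memZ2 α.imJ ∧ memZ2 α.imK) ∨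
    (memZ2 (α.re - 1/2) ∧ memZ2 (α.imI - 1/2) ∧ memZ2 (α.imJ - 1/2) ∧
      memZ2 (α.imK - 1/2)) := by
  open Hur in
  obtain ⟨hT, hN⟩ := Hur.key α hint
  have memZ2_four : memZ2 (4:ℚ) := ⟨4, 1, ⟨0, by ring⟩, by norm_num⟩
  -- sum of three squares of doubled imaginary parts
  have hsq3 : memZ2 ((2*α.imI)^2 + (2*α.imJ)^2 + (2*α.imK)^2) := by
    have hA := Hur.memZ2_add (Hur.memZ2_mul memZ2_four hN)
      (Hur.memZ2_neg (Hur.memZ2_mul hT hT))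
    have he : (2*α.imI)^2 + (2*α.imJ)^2 + (2*α.imK)^2
        = 4 * (α.re ^ 2 + α.imI ^ 2 + α.imJ ^ 2 + α.imK ^ 2) + -(2*α.re * (2*α.re)) := by
      ring
    rw [he]
    exact hA
  obtain ⟨hI, hJ, hK⟩ := Hur.L3 hsq3
  -- representations with odd denominators
  obtain ⟨m0, u0, hu0, he0⟩ := hT
  obtain ⟨m1, u1, hu1, he1⟩ := hI
  obtain ⟨m2, u2, hu2, he2⟩ := hJ
  obtain ⟨m3, u3, hu3, he3⟩ := hK
  set u : ℤ := u0 * u1 * u2 * u3 with hudef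
  have hu : Odd u := ((hu0.mul hu1).mul hu2).mul hu3
  have hu0' := Hur.odd_ne_zero hu0
  have hu1' := Hur.odd_ne_zero hu1
  have hu2' := Hur.odd_ne_zero hu2
  have hu3' := Hur.odd_ne_zero hu3
  have huZ : u ≠ 0 := Hur.odd_ne_zero hu
  have huQ : ((u:ℤ):ℚ) ≠ 0 := Int.cast_ne_zero.mpr huZ
  set k0 : ℤ := m0 * (u1 * u2 * u3) with hk0def
  set k1 : ℤ := m1 * (u0 * u2 * u3) with hk1def
  set k2 : ℤ := m2 * (u0 * u1 * u3) with hk2def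
  set k3 : ℤ := m3 * (u0 * u1 * u2) with hk3def
  have hE0 : 2 * α.re = ((k0:ℤ):ℚ) / ((u:ℤ):ℚ) := by
    have := Hur.scale (c := u1 * u2 * u3) he0 (by simp [hu1', hu2', hu3'])
    have hden : u0 * (u1 * u2 * u3) = u := by rw [hudef]; ring
    rwa [hden] at this
  have hE1 : 2 * α.imI = ((k1:ℤ):ℚ) / ((u:ℤ):ℚ) := by
    have := Hur.scale (c := u0 * u2 * u3) he1 (by simp [hu0', hu2', hu3'])
    have hden : u1 * (u0 * u2 * u3) = u := by rw [hudef]; ring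
    rwa [hden] at this
  have hE2 : 2 * α.imJ = ((k2:ℤ):ℚ) / ((u:ℤ):ℚ) := by
    have := Hur.scale (c := u0 * u1 * u3) he2 (by simp [hu0', hu1', hu3'])
    have hden : u2 * (u0 * u1 * u3) = u := by rw [hudef]; ring
    rwa [hden] at this
  have hE3 : 2 * α.imK = ((k3:ℤ):ℚ) / ((u:ℤ):ℚ) := by
    have := Hur.scale (c := u0 * u1 * u2) he3 (by simp [hu0', hu1', hu2'])
    have hden : u3 * (u0 * u1 * u2) = u := by rw [hudef]; ring
    rwa [hden] at this
  -- cross multiplication with nn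
  obtain ⟨mN, wN, hwN, heN⟩ := hN
  have hwN' : ((wN:ℤ):ℚ) ≠ 0 := Int.cast_ne_zero.mpr (Hur.odd_ne_zero hwN)
  have hcross : (k0^2 + k1^2 + k2^2 + k3^2) * wN = 4 * (mN * u^2) := by
    have hQ : (((k0^2 + k1^2 + k2^2 + k3^2 : ℤ)):ℚ) * ((wN:ℤ):ℚ)
        = 4 * (((mN:ℤ):ℚ) * ((u:ℤ):ℚ)^2) := by
      have hsum : ((k0:ℚ)^2 + (k1:ℚ)^2 + (k2:ℚ)^2 + (k3:ℚ)^2) / ((u:ℤ):ℚ)^2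
          = 4 * (((mN:ℤ):ℚ) / ((wN:ℤ):ℚ)) := by
        rw [← heN, div_eq_iff (by positivity : ((u:ℤ):ℚ)^2 ≠ 0)]
        have e0 := hE0; have e1 := hE1; have e2 := hE2; have e3 := hE3
        rw [eq_div_iff huQ] at e0 e1 e2 e3
        rw [← e0, ← e1, ← e2, ← e3]
        ring
      field_simp at hsum
      push_cast
      linarith [hsum]
    exact_mod_cast hQ
  have h4 : (4:ℤ) ∣ (k0^2 + k1^2 + k2^2 + k3^2) :=
    Hur.four_dvd_of_odd hwN ⟨mN * u^2, hcross⟩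
  rcases Hur.int4 h4 with ⟨⟨k0', hp0⟩, ⟨k1', hp1⟩, ⟨k2', hp2⟩, ⟨k3', hp3⟩⟩ |
    ⟨ho0, ho1, ho2, ho3⟩
  · left
    rw [hp0] at hE0; rw [hp1] at hE1; rw [hp2] at hE2; rw [hp3] at hE3
    exact ⟨⟨k0', u, hu, Hur.half_even huQ hE0⟩, ⟨k1', u, hu, Hur.half_even huQ hE1⟩,
      ⟨k2', u, hu, Hur.half_even huQ hE2⟩, ⟨k3', u, hu, Hur.half_even huQ hE3⟩⟩
  · right
    obtain ⟨s0, hs0⟩ := Odd.sub_odd ho0 hu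
    obtain ⟨s1, hs1⟩ := Odd.sub_odd ho1 hu
    obtain ⟨s2, hs2⟩ := Odd.sub_odd ho2 hu
    obtain ⟨s3, hs3⟩ := Odd.sub_odd ho3 hu
    exact ⟨⟨s0, u, hu, Hur.half_odd huQ hE0 hs0⟩, ⟨s1, u, hu, Hur.half_odd huQ hE1 hs1⟩,
      ⟨s2, u, hu, Hur.half_odd huQ hE2 hs2⟩, ⟨s3, u, hu, Hur.half_odd huQ hE3 hs3⟩⟩
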